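/- Let g(t₁,t₂) = −2n t₁ t₂ + t₂⌈n t₁⌉ + t₁⌈n t₂⌉ on [0,1]². Then for every p* ∈ [1,∞), the L_{p*}-norm of g satisfies ‖g‖_{L_{p*}([0,1]²)} ≤ 2^{p*+1}/(p*+1)². -/

import Mathlib

open MeasureTheory Set Real Filter


private lemma gaux_rpow_two {a b q : ℝ} (ha : 0 ≤ a) (hb : 0 ≤ b) (hq : 1 ≤ q) :
    (a + b) ^ q ≤ 2 ^ (q - 1) * (a ^ q + b ^ q) := by
  have h := NNReal.rpow_add_le_mul_rpow_add_rpow (⟨a, ha⟩ : NNReal) (⟨b, hb⟩ : NNReal) hq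
  rw [← NNReal.coe_le_coe] at h
  push_cast at h
  convert h using 3 <;> rfl

private lemma gaux_ii {f : ℝ → ℝ} (hf : Measurable f) {C : ℝ}
    (hC : ∀ x, |f x| ≤ C) (a b : ℝ) : IntervalIntegrable f volume a b := by
  rw [intervalIntegrable_iff]
  refine Measure.integrableOn_of_bounded (M := C) ?_ hf.aestronglyMeasurable ?_
  · exact (measure_Ioc_lt_top).ne
  · exact Eventually.of_forall fun x => by simpa [Real.norm_eq_abs] using hC x

private lemma gaux_meas (n : ℕ) {p : ℝ} (hp : 0 ≤ p) :
    Measurable fun t : ℝ => ((⌈(n : ℝ) * t⌉ : ℝ) - (n : ℝ) * t) ^ p := by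
  have h0 : Measurable fun t : ℝ => ((⌈(n : ℝ) * t⌉ : ℤ) : ℝ) :=
    (measurable_from_top (f := (Int.cast : ℤ → ℝ))).comp
      (Int.measurable_ceil.comp (measurable_const_mul _))
  have h1 : Measurable fun t : ℝ => (⌈(n : ℝ) * t⌉ : ℝ) - (n : ℝ) * t :=
    h0.sub (measurable_const_mul _)
  exact (Real.continuous_rpow_const hp).measurable.comp h1

private lemma gaux_c_mem (x : ℝ) : 0 ≤ (⌈x⌉ : ℝ) - x ∧ (⌈x⌉ : ℝ) - x ≤ 1 := by
  constructor
  · have := Int.le_ceil x; linarith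
  · have := Int.ceil_lt_add_one x; linarith

private lemma gaux_tpow {p : ℝ} (hp : 1 ≤ p) :
    ∫ t in (0:ℝ)..1, t ^ p = 1 / (p + 1) := by
  rw [integral_rpow (Or.inl (by linarith))]
  rw [Real.one_rpow, Real.zero_rpow (by linarith)]
  ring

private lemma gaux_cint (n : ℕ) (hn : 0 < n) {p : ℝ} (hp : 1 ≤ p) :
    ∫ t in (0:ℝ)..1, ((⌈(n : ℝ) * t⌉ : ℝ) - (n : ℝ) * t) ^ p = 1 / (p + 1) := by
  have hn' : (0:ℝ) < n := by exact_mod_cast hn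
  have hn0 : (n:ℝ) ≠ 0 := ne_of_gt hn'
  have hii : ∀ a b : ℝ,
      IntervalIntegrable (fun t => ((⌈(n : ℝ) * t⌉ : ℝ) - (n : ℝ) * t) ^ p) volume a b := by
    intro a b
    refine gaux_ii (gaux_meas n (by linarith)) (C := 1) (fun x => ?_) a b
    obtain ⟨h0, h1⟩ := gaux_c_mem ((n:ℝ)*x)
    rw [abs_of_nonneg (Real.rpow_nonneg h0 p)]
    exact Real.rpow_le_one h0 h1 (by linarith)
  have key : ∀ k : ℕ, (∫ t in ((k:ℝ)/n)..(((k:ℝ)+1)/n),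
      ((⌈(n : ℝ) * t⌉ : ℝ) - (n : ℝ) * t) ^ p) = (n:ℝ)⁻¹ * (1/(p+1)) := by
    intro k
    have hab : ((k:ℝ))/n ≤ ((k:ℝ)+1)/n := by
      gcongr <;> linarith
    have hcong : (∫ t in ((k:ℝ)/n)..(((k:ℝ)+1)/n), ((⌈(n : ℝ) * t⌉ : ℝ) - (n : ℝ) * t) ^ p)
        = ∫ t in ((k:ℝ)/n)..(((k:ℝ)+1)/n), (((k:ℝ)+1) - (n:ℝ)*t) ^ p := by
      rw [intervalIntegral.integral_of_le hab, intervalIntegral.integral_of_le hab]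
      refine setIntegral_congr_fun measurableSet_Ioc (fun t ht => ?_)
      have h1 : (k:ℝ) < n*t := by
        have := ht.1
        rw [div_lt_iff₀ hn'] at this
        linarith [this]
      have h2 : (n:ℝ)*t ≤ (k:ℝ)+1 := by
        have := ht.2
        rw [le_div_iff₀ hn'] at this
        linarith [this]
      have hc : ⌈(n:ℝ)*t⌉ = (k:ℤ)+1 := by
        rw [Int.ceil_eq_iff]
        constructor <;> push_cast <;> linarith
      rw [hc]
      push_cast
      ring_nf
    rw [hcong]
    have hsub := intervalIntegral.integral_comp_sub_mul (a := ((k:ℝ))/n) (b := ((k:ℝ)+1)/n)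
      (fun u : ℝ => u ^ p) hn0 ((k:ℝ)+1)
    have e1 : (k:ℝ)+1 - (n:ℝ)*(((k:ℝ)+1)/n) = 0 := by field_simp; ring
    have e2 : (k:ℝ)+1 - (n:ℝ)*(((k:ℝ))/n) = 1 := by field_simp; ring
    rw [e1, e2] at hsub
    rw [hsub, gaux_tpow hp, smul_eq_mul]
  have hsum := intervalIntegral.sum_integral_adjacent_intervals
    (a := fun k : ℕ => (k:ℝ)/n) (μ := volume) (n := n) (fun k _ => hii _ _)
  have hz : ((0:ℕ):ℝ)/(n:ℝ) = 0 := by simp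
  have ho : ((n:ℕ):ℝ)/(n:ℝ) = 1 := by field_simp
  rw [hz, ho] at hsum
  rw [← hsum]
  have : ∀ k ∈ Finset.range n, (∫ t in ((k:ℝ)/n)..((((k+1):ℕ):ℝ)/n),
      ((⌈(n : ℝ) * t⌉ : ℝ) - (n : ℝ) * t) ^ p) = (n:ℝ)⁻¹ * (1/(p+1)) := by
    intro k _
    have : ((((k+1):ℕ)):ℝ) = (k:ℝ)+1 := by push_cast; ring
    rw [this]
    exact key k
  rw [Finset.sum_congr rfl this, Finset.sum_const, Finset.card_range, nsmul_eq_mul]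
  field_simp

private lemma gaux_key {p : ℝ} (hp : 1 ≤ p) :
    (p+1) ^ (2*p-2) ≤ (2:ℝ) ^ (p*p) := by
  have hq : (0:ℝ) < p + 1 := by linarith
  rw [Real.rpow_def_of_pos hq, Real.rpow_def_of_pos (by norm_num : (0:ℝ) < 2)]
  apply Real.exp_le_exp.2
  have hlog : Real.log (p+1) ≤ 2 * Real.log 2 + (p-3)/4 := by
    have h4 : Real.log ((p+1)/4) ≤ (p+1)/4 - 1 :=
      Real.log_le_sub_one_of_pos (by positivity)
    rw [Real.log_div (by linarith) (by norm_num)] at h4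
    have h42 : Real.log 4 = 2 * Real.log 2 := by
      rw [show (4:ℝ) = 2^2 by norm_num, Real.log_pow]; push_cast; ring
    linarith
  have hL : (0:ℝ) ≤ Real.log 2 - 1/2 := by
    have := Real.log_two_gt_d9; linarith
  have hmul := mul_le_mul_of_nonneg_left hlog (show (0:ℝ) ≤ 2*p-2 by linarith)
  nlinarith [mul_nonneg hL (sq_nonneg (p-2))]

private lemma gaux_final {p : ℝ} (hp : 1 ≤ p) :
    ((2:ℝ) ^ p / (p+1)^2) ^ (1/p) ≤ 2 ^ (p+1) / (p+1)^2 := by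
  have hp0 : (0:ℝ) < p := by linarith
  have hq : (0:ℝ) < p + 1 := by linarith
  have hB0 : (0:ℝ) ≤ 2 ^ (p+1) / (p+1)^2 := by positivity
  have hA0 : (0:ℝ) ≤ 2 ^ p / (p+1)^2 := by positivity
  have hnp : ((p+1):ℝ)^(2:ℕ) = (p+1) ^ ((2:ℕ):ℝ) := (Real.rpow_natCast _ 2).symm
  have hstep : (2:ℝ) ^ p / (p+1)^2 ≤ ((2:ℝ) ^ (p+1) / (p+1)^2) ^ p := by
    rw [Real.div_rpow (by positivity) (by positivity), hnp,
      ← Real.rpow_mul hq.le, ← Real.rpow_mul (by norm_num : (0:ℝ) ≤ 2)]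
    rw [div_le_div_iff₀ (by positivity) (by positivity)]
    push_cast
    have e1 : ((2:ℝ))*p = (2*p-2) + 2 := by ring
    have e2 : ((p:ℝ)+1)*p = p*p + p := by ring
    rw [e1, e2, Real.rpow_add hq, Real.rpow_add (by norm_num : (0:ℝ) < 2)]
    calc (2:ℝ)^p * ((p+1)^(2*p-2) * (p+1)^((2:ℝ)))
        ≤ (2:ℝ)^p * ((2:ℝ)^(p*p) * (p+1)^((2:ℝ))) := by
          have h2 := gaux_key hp
          have := Real.rpow_nonneg hq.le ((2:ℝ))
          gcongr
      _ = (2:ℝ)^(p*p) * 2^p * (p+1)^((2:ℝ)) := by ring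
  calc ((2:ℝ) ^ p / (p+1)^2) ^ (1/p)
      ≤ (((2:ℝ) ^ (p+1) / (p+1)^2) ^ p) ^ (1/p) :=
        Real.rpow_le_rpow hA0 hstep (by positivity)
    _ = ((2:ℝ) ^ (p+1) / (p+1)^2) ^ (p * (1/p)) := (Real.rpow_mul hB0 _ _).symm
    _ = (2:ℝ) ^ (p+1) / (p+1)^2 := by
        rw [mul_one_div_cancel hp0.ne', Real.rpow_one]

private lemma gaux_ii2 {f : ℝ → ℝ} (hf : Measurable f) {C : ℝ} (a b : ℝ) (hab : a ≤ b)
    (hC : ∀ x ∈ Set.Ioc a b, |f x| ≤ C) : IntervalIntegrable f volume a b := by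
  rw [intervalIntegrable_iff, uIoc_of_le hab]
  refine Measure.integrableOn_of_bounded (M := C) measure_Ioc_lt_top.ne hf.aestronglyMeasurable ?_
  rw [ae_restrict_iff' measurableSet_Ioc]
  exact Eventually.of_forall fun x hx => by simpa [Real.norm_eq_abs] using hC x hx

theorem g_Lp_norm_bound (n : ℕ) (hn : 0 < n) (p : ℝ) (hp : 1 ≤ p) :
    (∫ t₁ in (0:ℝ)..1, ∫ t₂ in (0:ℝ)..1,
        |(-2) * n * t₁ * t₂ + t₂ * (⌈(n : ℝ) * t₁⌉ : ℝ) + t₁ * (⌈(n : ℝ) * t₂⌉ : ℝ)| ^ p) ^ (1 / p)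
      ≤ 2 ^ (p + 1) / (p + 1) ^ 2 := by
  have hp0 : (0:ℝ) < p := by linarith
  have hp0' : (0:ℝ) ≤ p := hp0.le
  -- ceil cast measurability
  have hmceil : Measurable fun t : ℝ => ((⌈(n : ℝ) * t⌉ : ℤ) : ℝ) :=
    (measurable_from_top (f := (Int.cast : ℤ → ℝ))).comp
      (Int.measurable_ceil.comp (measurable_const_mul _))
  -- abs identity
  have habs : ∀ t₁ t₂ : ℝ, 0 ≤ t₁ → 0 ≤ t₂ →
      |(-2) * (n:ℝ) * t₁ * t₂ + t₂ * (⌈(n : ℝ) * t₁⌉ : ℝ) + t₁ * (⌈(n : ℝ) * t₂⌉ : ℝ)|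
        = t₂ * ((⌈(n : ℝ) * t₁⌉ : ℝ) - (n:ℝ) * t₁) + t₁ * ((⌈(n : ℝ) * t₂⌉ : ℝ) - (n:ℝ) * t₂) := by
    intro t₁ t₂ h1 h2
    have e : (-2) * (n:ℝ) * t₁ * t₂ + t₂ * (⌈(n : ℝ) * t₁⌉ : ℝ) + t₁ * (⌈(n : ℝ) * t₂⌉ : ℝ)
        = t₂ * ((⌈(n : ℝ) * t₁⌉ : ℝ) - (n:ℝ) * t₁) + t₁ * ((⌈(n : ℝ) * t₂⌉ : ℝ) - (n:ℝ) * t₂) := by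
      ring
    rw [e, abs_of_nonneg]
    exact add_nonneg (mul_nonneg h2 (gaux_c_mem _).1) (mul_nonneg h1 (gaux_c_mem _).1)
  -- pointwise bound
  have hpt : ∀ t₁ t₂ : ℝ, 0 ≤ t₁ → 0 ≤ t₂ →
      |(-2) * (n:ℝ) * t₁ * t₂ + t₂ * (⌈(n : ℝ) * t₁⌉ : ℝ) + t₁ * (⌈(n : ℝ) * t₂⌉ : ℝ)| ^ p
        ≤ (2 ^ (p-1) * ((⌈(n : ℝ) * t₁⌉ : ℝ) - (n:ℝ) * t₁) ^ p) * t₂ ^ p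
          + (2 ^ (p-1) * t₁ ^ p) * (((⌈(n : ℝ) * t₂⌉ : ℝ) - (n:ℝ) * t₂)) ^ p := by
    intro t₁ t₂ h1 h2
    rw [habs t₁ t₂ h1 h2]
    have c1 := (gaux_c_mem ((n:ℝ) * t₁)).1
    have c2 := (gaux_c_mem ((n:ℝ) * t₂)).1
    calc (t₂ * ((⌈(n : ℝ) * t₁⌉ : ℝ) - (n:ℝ) * t₁)
            + t₁ * ((⌈(n : ℝ) * t₂⌉ : ℝ) - (n:ℝ) * t₂)) ^ p
        ≤ 2 ^ (p-1) * ((t₂ * ((⌈(n : ℝ) * t₁⌉ : ℝ) - (n:ℝ) * t₁)) ^ p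
            + (t₁ * ((⌈(n : ℝ) * t₂⌉ : ℝ) - (n:ℝ) * t₂)) ^ p) :=
          gaux_rpow_two (mul_nonneg h2 c1) (mul_nonneg h1 c2) hp
      _ = _ := by
          rw [Real.mul_rpow h2 c1, Real.mul_rpow h1 c2]; ring
  -- inner-integrand measurability (fixed t₁)
  have hmf : ∀ t₁ : ℝ, Measurable fun t₂ : ℝ =>
      |(-2) * (n:ℝ) * t₁ * t₂ + t₂ * (⌈(n : ℝ) * t₁⌉ : ℝ) + t₁ * (⌈(n : ℝ) * t₂⌉ : ℝ)| ^ p := by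
    intro t₁
    have hbase : Measurable fun t₂ : ℝ =>
        (-2) * (n:ℝ) * t₁ * t₂ + t₂ * (⌈(n : ℝ) * t₁⌉ : ℝ) + t₁ * (⌈(n : ℝ) * t₂⌉ : ℝ) :=
      ((measurable_id.const_mul _).add (measurable_id.mul_const _)).add (hmceil.const_mul _)
    exact (Real.continuous_rpow_const hp0').measurable.comp hbase.abs
  -- bound for inner integrand on the square
  have hboundf : ∀ t₁ ∈ Icc (0:ℝ) 1, ∀ t₂ ∈ Icc (0:ℝ) 1,
      |(-2) * (n:ℝ) * t₁ * t₂ + t₂ * (⌈(n : ℝ) * t₁⌉ : ℝ) + t₁ * (⌈(n : ℝ) * t₂⌉ : ℝ)| ^ p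
        ≤ 2 ^ p := by
    intro t₁ h1 t₂ h2
    rw [habs t₁ t₂ h1.1 h2.1]
    have c1 := gaux_c_mem ((n:ℝ) * t₁)
    have c2 := gaux_c_mem ((n:ℝ) * t₂)
    have hb : t₂ * ((⌈(n : ℝ) * t₁⌉ : ℝ) - (n:ℝ) * t₁)
        + t₁ * ((⌈(n : ℝ) * t₂⌉ : ℝ) - (n:ℝ) * t₂) ≤ 2 := by
      nlinarith [h1.1, h1.2, h2.1, h2.2, c1.1, c1.2, c2.1, c2.2]
    exact Real.rpow_le_rpow
      (add_nonneg (mul_nonneg h2.1 c1.1) (mul_nonneg h1.1 c2.1)) hb hp0'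
  -- interval integrability of inner integrand
  have hif : ∀ t₁ ∈ Icc (0:ℝ) 1, IntervalIntegrable (fun t₂ : ℝ =>
      |(-2) * (n:ℝ) * t₁ * t₂ + t₂ * (⌈(n : ℝ) * t₁⌉ : ℝ) + t₁ * (⌈(n : ℝ) * t₂⌉ : ℝ)| ^ p)
      volume 0 1 := by
    intro t₁ h1
    refine gaux_ii2 (C := (2:ℝ)^p) (hmf t₁) 0 1 (by norm_num) (fun x hx => ?_)
    rw [abs_of_nonneg (Real.rpow_nonneg (abs_nonneg _) p)]
    exact hboundf t₁ h1 x (Ioc_subset_Icc_self hx)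
  -- integrability of the c-power function
  have hic : IntervalIntegrable (fun t : ℝ => ((⌈(n : ℝ) * t⌉ : ℝ) - (n:ℝ) * t) ^ p)
      volume 0 1 := by
    have hm : Measurable fun t : ℝ => ((⌈(n : ℝ) * t⌉ : ℝ) - (n:ℝ) * t) ^ p :=
      (Real.continuous_rpow_const hp0').measurable.comp (hmceil.sub (measurable_const_mul _))
    refine gaux_ii2 (C := (1:ℝ)) hm 0 1 (by norm_num) (fun x _ => ?_)
    obtain ⟨c0, c1⟩ := gaux_c_mem ((n:ℝ) * x)
    rw [abs_of_nonneg (Real.rpow_nonneg c0 p)]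
    exact Real.rpow_le_one c0 c1 hp0'
  have hit : IntervalIntegrable (fun t : ℝ => t ^ p) volume 0 1 :=
    (Real.continuous_rpow_const hp0').intervalIntegrable 0 1
  -- inner integral bound
  have hinner : ∀ t₁ ∈ Icc (0:ℝ) 1,
      (∫ t₂ in (0:ℝ)..1,
        |(-2) * (n:ℝ) * t₁ * t₂ + t₂ * (⌈(n : ℝ) * t₁⌉ : ℝ) + t₁ * (⌈(n : ℝ) * t₂⌉ : ℝ)| ^ p)
      ≤ (2 ^ (p-1) * ((⌈(n : ℝ) * t₁⌉ : ℝ) - (n:ℝ) * t₁) ^ p) * (1/(p+1))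
        + (2 ^ (p-1) * t₁ ^ p) * (1/(p+1)) := by
    intro t₁ h1
    have step : (∫ t₂ in (0:ℝ)..1,
        |(-2) * (n:ℝ) * t₁ * t₂ + t₂ * (⌈(n : ℝ) * t₁⌉ : ℝ) + t₁ * (⌈(n : ℝ) * t₂⌉ : ℝ)| ^ p)
        ≤ ∫ t₂ in (0:ℝ)..1, ((2 ^ (p-1) * ((⌈(n : ℝ) * t₁⌉ : ℝ) - (n:ℝ) * t₁) ^ p) * t₂ ^ p
            + (2 ^ (p-1) * t₁ ^ p) * (((⌈(n : ℝ) * t₂⌉ : ℝ) - (n:ℝ) * t₂)) ^ p) := by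
      refine intervalIntegral.integral_mono_on (by norm_num) (hif t₁ h1)
        ((hit.const_mul _).add (hic.const_mul _)) (fun x hx => hpt t₁ x h1.1 hx.1)
    refine step.trans_eq ?_
    rw [intervalIntegral.integral_add (hit.const_mul _) (hic.const_mul _),
      intervalIntegral.integral_const_mul, intervalIntegral.integral_const_mul,
      gaux_tpow hp, gaux_cint n hn hp]
  -- measurability of inner-integral function
  have hunc : Measurable fun q : ℝ × ℝ =>
      |(-2) * (n:ℝ) * q.1 * q.2 + q.2 * (⌈(n : ℝ) * q.1⌉ : ℝ) + q.1 * (⌈(n : ℝ) * q.2⌉ : ℝ)| ^ p := by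
    have hbase : Measurable fun q : ℝ × ℝ =>
        (-2) * (n:ℝ) * q.1 * q.2 + q.2 * (⌈(n : ℝ) * q.1⌉ : ℝ) + q.1 * (⌈(n : ℝ) * q.2⌉ : ℝ) :=
      (((measurable_fst.const_mul _).mul measurable_snd).add
        (measurable_snd.mul (hmceil.comp measurable_fst))).add
        (measurable_fst.mul (hmceil.comp measurable_snd))
    exact (Real.continuous_rpow_const hp0').measurable.comp hbase.abs
  have hmF : Measurable fun t₁ : ℝ => ∫ t₂ in (0:ℝ)..1,
      |(-2) * (n:ℝ) * t₁ * t₂ + t₂ * (⌈(n : ℝ) * t₁⌉ : ℝ) + t₁ * (⌈(n : ℝ) * t₂⌉ : ℝ)| ^ p := by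
    have heq : (fun t₁ : ℝ => ∫ t₂ in (0:ℝ)..1,
        |(-2) * (n:ℝ) * t₁ * t₂ + t₂ * (⌈(n : ℝ) * t₁⌉ : ℝ) + t₁ * (⌈(n : ℝ) * t₂⌉ : ℝ)| ^ p)
        = fun t₁ : ℝ => ∫ t₂,
          |(-2) * (n:ℝ) * t₁ * t₂ + t₂ * (⌈(n : ℝ) * t₁⌉ : ℝ) + t₁ * (⌈(n : ℝ) * t₂⌉ : ℝ)| ^ p
            ∂(volume.restrict (Ioc (0:ℝ) 1)) :=
      funext fun t₁ => intervalIntegral.integral_of_le (by norm_num)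
    rw [heq]
    exact (hunc.stronglyMeasurable.integral_prod_right'
      (ν := volume.restrict (Ioc (0:ℝ) 1))).measurable
  -- bound and integrability of F
  have hFbound : ∀ t₁ ∈ Ioc (0:ℝ) 1, |∫ t₂ in (0:ℝ)..1,
      |(-2) * (n:ℝ) * t₁ * t₂ + t₂ * (⌈(n : ℝ) * t₁⌉ : ℝ) + t₁ * (⌈(n : ℝ) * t₂⌉ : ℝ)| ^ p|
      ≤ 2 ^ p := by
    intro t₁ h1
    have h1' : t₁ ∈ Icc (0:ℝ) 1 := Ioc_subset_Icc_self h1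
    have hnn : (0:ℝ) ≤ ∫ t₂ in (0:ℝ)..1,
        |(-2) * (n:ℝ) * t₁ * t₂ + t₂ * (⌈(n : ℝ) * t₁⌉ : ℝ) + t₁ * (⌈(n : ℝ) * t₂⌉ : ℝ)| ^ p :=
      intervalIntegral.integral_nonneg (by norm_num)
        (fun x _ => Real.rpow_nonneg (abs_nonneg _) p)
    rw [abs_of_nonneg hnn]
    calc (∫ t₂ in (0:ℝ)..1,
          |(-2) * (n:ℝ) * t₁ * t₂ + t₂ * (⌈(n : ℝ) * t₁⌉ : ℝ) + t₁ * (⌈(n : ℝ) * t₂⌉ : ℝ)| ^ p)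
        ≤ ∫ _t₂ in (0:ℝ)..1, (2:ℝ)^p :=
          intervalIntegral.integral_mono_on (by norm_num) (hif t₁ h1')
            intervalIntegrable_const (fun x hx => hboundf t₁ h1' x hx)
      _ = 2 ^ p := by simp
  have hiF : IntervalIntegrable (fun t₁ : ℝ => ∫ t₂ in (0:ℝ)..1,
      |(-2) * (n:ℝ) * t₁ * t₂ + t₂ * (⌈(n : ℝ) * t₁⌉ : ℝ) + t₁ * (⌈(n : ℝ) * t₂⌉ : ℝ)| ^ p)
      volume 0 1 :=
    gaux_ii2 (C := (2:ℝ)^p) hmF 0 1 (by norm_num) hFbound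
  have hiH : IntervalIntegrable (fun t₁ : ℝ =>
      (2 ^ (p-1) * ((⌈(n : ℝ) * t₁⌉ : ℝ) - (n:ℝ) * t₁) ^ p) * (1/(p+1))
        + (2 ^ (p-1) * t₁ ^ p) * (1/(p+1))) volume 0 1 :=
    ((hic.const_mul _).mul_const _).add ((hit.const_mul _).mul_const _)
  -- outer integral bound
  have houter : (∫ t₁ in (0:ℝ)..1, ∫ t₂ in (0:ℝ)..1,
      |(-2) * (n:ℝ) * t₁ * t₂ + t₂ * (⌈(n : ℝ) * t₁⌉ : ℝ) + t₁ * (⌈(n : ℝ) * t₂⌉ : ℝ)| ^ p)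
      ≤ 2 ^ p / (p+1)^2 := by
    have step := intervalIntegral.integral_mono_on (by norm_num) hiF hiH hinner
    refine step.trans_eq ?_
    rw [intervalIntegral.integral_add ((hic.const_mul _).mul_const _) ((hit.const_mul _).mul_const _),
      intervalIntegral.integral_mul_const, intervalIntegral.integral_mul_const,
      intervalIntegral.integral_const_mul, intervalIntegral.integral_const_mul,
      gaux_tpow hp, gaux_cint n hn hp]
    have h2 : (2:ℝ) ^ (p-1) * 2 = 2 ^ p := by
      rw [Real.rpow_sub (by norm_num : (0:ℝ) < 2), Real.rpow_one]
      field_simp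
    have hq0 : (p+1) ≠ 0 := by positivity
    field_simp
    nlinarith [h2, sq_nonneg (p+1)]
  have hI0 : (0:ℝ) ≤ ∫ t₁ in (0:ℝ)..1, ∫ t₂ in (0:ℝ)..1,
      |(-2) * (n:ℝ) * t₁ * t₂ + t₂ * (⌈(n : ℝ) * t₁⌉ : ℝ) + t₁ * (⌈(n : ℝ) * t₂⌉ : ℝ)| ^ p :=
    intervalIntegral.integral_nonneg (by norm_num) (fun x _ =>
      intervalIntegral.integral_nonneg (by norm_num)
        (fun y _ => Real.rpow_nonneg (abs_nonneg _) p))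
  calc (∫ t₁ in (0:ℝ)..1, ∫ t₂ in (0:ℝ)..1,
        |(-2) * (n:ℝ) * t₁ * t₂ + t₂ * (⌈(n : ℝ) * t₁⌉ : ℝ) + t₁ * (⌈(n : ℝ) * t₂⌉ : ℝ)| ^ p) ^ (1/p)
      ≤ ((2:ℝ) ^ p / (p+1)^2) ^ (1/p) := Real.rpow_le_rpow hI0 houter (by positivity)
    _ ≤ _ := gaux_final hp
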